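/- Let T be a positive integer, let z_1,…,z_T ≥ 0 and u_1,…,u_T ≥ 0 be real sequences, let ĥ_1,…,ĥ_{T+1} > 0, and let z_max = max_{t∈[T]} z_t. Suppose (β_t)_{t=1}^T is given by Rule 2: β_1 > 0 is arbitrary and β_t = β_{t−1} + (1/ĥ_t)(2√(z_{t−1}/β_{t−1}) + u_{t−1}/β_{t−1}) for t = 2,…,T. Then for every c > 1, ∑_{t=1}^T √(z_t/β_t) ≤ (c/2^{1/3}) · G1(z_{1:T}, ĥ_{2:T+1}) + (c/(c−1)) · √(z_max/β_1). -/

import Mathlib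

open Finset

/-- `G1(z_{1:T}, h_{1:T}) = ∑_{t=1}^T √(z_t) / (∑_{s=1}^t √(z_s)/h_s)^{1/3}`.
Applied with `h = fun s => hhat (s+1)` this is the shifted quantity `G1(z_{1:T}, hhat_{2:T+1})`. -/
noncomputable def G1 (T : ℕ) (z h : ℕ → ℝ) : ℝ :=
  ∑ t ∈ Finset.Icc 1 T,
    Real.sqrt (z t) / (∑ s ∈ Finset.Icc 1 t, Real.sqrt (z s) / h s) ^ ((1 : ℝ) / 3)


private lemma cube_sqrt (x : ℝ) (hx : 0 ≤ x) : (Real.sqrt x) ^ 3 = x * Real.sqrt x := by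
  rw [show (3:ℕ) = 2 + 1 from rfl, pow_succ, Real.sq_sqrt hx]

private lemma le_of_cube_le (x y : ℝ) (hx : 0 ≤ x) (h : x ^ 3 ≤ y ^ 3) : x ≤ y := by
  rcases le_or_gt 0 y with hy | hy
  · exact (pow_le_pow_iff_left₀ hx hy (by norm_num)).1 h
  · nlinarith [pow_nonneg hx 3, mul_pos (mul_pos (neg_pos.2 hy) (neg_pos.2 hy)) (neg_pos.2 hy)]

private lemma cube_key (a d : ℝ) (ha : 0 < a) (hd : 0 ≤ d) :
    a * Real.sqrt a + 3 / 2 * Real.sqrt a * d ≤ (a + d) * Real.sqrt (a + d) := by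
  set x := Real.sqrt a with hx'
  set y := Real.sqrt (a + d) with hy'
  have hx : 0 < x := Real.sqrt_pos.2 ha
  have hxy : x ≤ y := Real.sqrt_le_sqrt (by linarith)
  have hx2 : x ^ 2 = a := Real.sq_sqrt ha.le
  have hy2 : y ^ 2 = a + d := Real.sq_sqrt (by linarith)
  nlinarith [mul_nonneg (mul_nonneg (sub_nonneg.2 hxy) (sub_nonneg.2 hxy))
    (by linarith : (0:ℝ) ≤ y + x / 2)]

private lemma geom_sum_bound (c : ℝ) (hc : 1 < c) (f : ℕ → ℝ) :
    ∀ n : ℕ, ∀ B : Finset ℕ, B.card = n → ∀ b : ℝ, 0 < b →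
      (∀ t ∈ B, b ≤ f t) →
      (∀ t ∈ B, ∀ t' ∈ B, t < t' → c * f t ≤ f t') →
      ∑ t ∈ B, 1 / f t ≤ c / ((c - 1) * b) := by
  have hc1 : 0 < c - 1 := by linarith
  intro n
  induction n with
  | zero =>
    intro B hB b hb _ _
    rw [Finset.card_eq_zero.1 hB, Finset.sum_empty]
    positivity
  | succ n ih =>
    intro B hB b hb hlb hpair
    have hne : B.Nonempty := Finset.card_pos.1 (by omega)
    set m := B.min' hne with hm
    have hmB : m ∈ B := B.min'_mem hne
    have hfm : b ≤ f m := hlb m hmB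
    have hfmpos : 0 < f m := lt_of_lt_of_le hb hfm
    have hcard : (B.erase m).card = n := by rw [Finset.card_erase_of_mem hmB, hB]; omega
    have h1 : ∑ t ∈ B.erase m, 1 / f t ≤ c / ((c - 1) * (c * f m)) := by
      apply ih _ hcard
      · positivity
      · intro t ht
        have htB := Finset.mem_of_mem_erase ht
        have hmt : m < t := lt_of_le_of_ne (B.min'_le t htB) (Ne.symm (Finset.ne_of_mem_erase ht))
        exact hpair m hmB t htB hmt
      · intro t ht t' ht' h
        exact hpair t (Finset.mem_of_mem_erase ht) t' (Finset.mem_of_mem_erase ht') h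
    have hsum : ∑ t ∈ B, 1 / f t = 1 / f m + ∑ t ∈ B.erase m, 1 / f t :=
      (Finset.add_sum_erase B _ hmB).symm
    rw [hsum]
    have heq : c / ((c - 1) * (c * f m)) = 1 / ((c - 1) * f m) := by
      field_simp
    rw [heq] at h1
    have key : 1 / f m + 1 / ((c - 1) * f m) ≤ c / ((c - 1) * b) := by
      rw [div_add_div _ _ (ne_of_gt hfmpos) (by positivity), div_le_div_iff₀ (by positivity) (by positivity)]
      nlinarith [mul_le_mul_of_nonneg_left hfm (by positivity : (0:ℝ) ≤ c * (c - 1) * f m),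
        mul_pos hc1 hb]
    linarith

set_option maxHeartbeats 1000000 in
theorem stmt_11 (T : ℕ) (hT : 1 ≤ T) (z u : ℕ → ℝ) (hhat : ℕ → ℝ) (β : ℕ → ℝ)
    (hz : ∀ t ∈ Finset.Icc 1 T, 0 ≤ z t)
    (hu : ∀ t ∈ Finset.Icc 1 T, 0 ≤ u t)
    (hhhat : ∀ t ∈ Finset.Icc 1 (T + 1), 0 < hhat t)
    (zmax : ℝ)
    (hzmax : zmax = (Finset.Icc 1 T).sup' (Finset.nonempty_Icc.mpr hT) z)
    (hβ1 : 0 < β 1)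
    (hrule : ∀ t ∈ Finset.Icc 2 T,
      β t = β (t - 1)
        + (1 / hhat t) * (2 * Real.sqrt (z (t - 1) / β (t - 1)) + u (t - 1) / β (t - 1))) :
    ∀ c : ℝ, 1 < c →
      ∑ t ∈ Finset.Icc 1 T, Real.sqrt (z t / β t)
        ≤ c / (2 : ℝ) ^ ((1 : ℝ) / 3) * G1 T z (fun s => hhat (s + 1))
          + c / (c - 1) * Real.sqrt (zmax / β 1) := by
  intro c hc
  classical
  have hc0 : (0:ℝ) < c := lt_trans one_pos hc
  set S : ℕ → ℝ := fun t => ∑ s ∈ Finset.Icc 1 t, Real.sqrt (z s) / hhat (s + 1) with hSdef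
  have hStermpos : ∀ t ≤ T, ∀ s ∈ Finset.Icc 1 t, 0 ≤ Real.sqrt (z s) / hhat (s + 1) := by
    intro t htT s hs
    rw [Finset.mem_Icc] at hs
    have hh : 0 < hhat (s + 1) := hhhat (s + 1) (Finset.mem_Icc.2 ⟨by omega, by omega⟩)
    exact div_nonneg (Real.sqrt_nonneg _) hh.le
  have hSnonneg : ∀ t, t ≤ T → 0 ≤ S t := fun t htT =>
    Finset.sum_nonneg (hStermpos t htT)
  have hSmono : ∀ r t, r ≤ t → t ≤ T → S r ≤ S t := by
    intro r t hrt htT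
    apply Finset.sum_le_sum_of_subset_of_nonneg (Finset.Icc_subset_Icc_right hrt)
    intro s hs _
    exact hStermpos t htT s hs
  have hβpos : ∀ t, 1 ≤ t → t ≤ T → 0 < β t := by
    intro t ht
    induction t, ht using Nat.le_induction with
    | base => intro _; exact hβ1
    | succ n hn ih =>
      intro hnT
      have hβn := ih (by omega)
      have hr := hrule (n + 1) (Finset.mem_Icc.2 ⟨by omega, hnT⟩)
      simp only [Nat.add_sub_cancel] at hr
      have h1 : 0 < hhat (n + 1) := hhhat (n + 1) (Finset.mem_Icc.2 ⟨by omega, by omega⟩)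
      have h2 : 0 ≤ u n := hu n (Finset.mem_Icc.2 ⟨hn, by omega⟩)
      have h3 : 0 ≤ Real.sqrt (z n / β n) := Real.sqrt_nonneg _
      have h4 : 0 ≤ u n / β n := div_nonneg h2 hβn.le
      rw [hr]
      have h5 : 0 ≤ (1 / hhat (n + 1)) * (2 * Real.sqrt (z n / β n) + u n / β n) := by positivity
      linarith
  have hgrow : ∀ t, 1 ≤ t → t ≤ T →
      β 1 * Real.sqrt (β 1) + 3 * S (t - 1) ≤ β t * Real.sqrt (β t) := by
    intro t ht
    induction t, ht using Nat.le_induction with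
    | base =>
      intro _
      simp [hSdef]
    | succ n hn ih =>
      intro hnT
      have hnT' : n ≤ T := by omega
      have hβn := hβpos n hn hnT'
      have hr := hrule (n + 1) (Finset.mem_Icc.2 ⟨by omega, hnT⟩)
      simp only [Nat.add_sub_cancel] at hr
      have hh : 0 < hhat (n + 1) := hhhat (n + 1) (Finset.mem_Icc.2 ⟨by omega, by omega⟩)
      have hzn : 0 ≤ z n := hz n (Finset.mem_Icc.2 ⟨hn, hnT'⟩)
      have hun : 0 ≤ u n := hu n (Finset.mem_Icc.2 ⟨hn, hnT'⟩)
      have hsβ : 0 < Real.sqrt (β n) := Real.sqrt_pos.2 hβn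
      have hsqrtdiv : Real.sqrt (z n / β n) = Real.sqrt (z n) / Real.sqrt (β n) :=
        Real.sqrt_div hzn _
      set d := (1 / hhat (n + 1)) * (2 * Real.sqrt (z n / β n) + u n / β n) with hd
      have hd0 : 0 ≤ d := by
        have h4 : 0 ≤ u n / β n := div_nonneg hun hβn.le
        have h3 : 0 ≤ Real.sqrt (z n / β n) := Real.sqrt_nonneg _
        positivity
      have hkey1 : 3 * (Real.sqrt (z n) / hhat (n + 1)) ≤ 3 / 2 * Real.sqrt (β n) * d := by
        rw [hd, hsqrtdiv]
        have h4 : 0 ≤ u n / β n := div_nonneg hun hβn.le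
        have expand : 3 / 2 * Real.sqrt (β n) *
            ((1 / hhat (n + 1)) * (2 * (Real.sqrt (z n) / Real.sqrt (β n)) + u n / β n))
            = 3 * (Real.sqrt (z n) / hhat (n + 1))
              + 3 / 2 * Real.sqrt (β n) * (u n / β n) / hhat (n + 1) := by
          field_simp
        rw [expand]
        have h5 : 0 ≤ 3 / 2 * Real.sqrt (β n) * (u n / β n) / hhat (n + 1) := by positivity
        linarith
      have hck := cube_key (β n) d hβn hd0
      have hSstep : S n = S (n - 1) + Real.sqrt (z n) / hhat (n + 1) := by
        obtain ⟨m, rfl⟩ : ∃ m, n = m + 1 := ⟨n - 1, by omega⟩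
        simp only [hSdef, Nat.add_sub_cancel]
        exact Finset.sum_Icc_succ_top (by omega) _
      have ihn := ih hnT'
      have hβ1n : β (n + 1) = β n + d := hr
      rw [hβ1n]
      simp only [Nat.add_sub_cancel]
      rw [hSstep]
      linarith
  have hβge : ∀ t, 1 ≤ t → t ≤ T → Real.sqrt (β 1) ≤ Real.sqrt (β t) := by
    intro t ht htT
    apply le_of_cube_le _ _ (Real.sqrt_nonneg _)
    rw [cube_sqrt _ hβ1.le, cube_sqrt _ (hβpos t ht htT).le]
    have := hgrow t ht htT
    have hS := hSnonneg (t - 1) (by omega)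
    linarith
  set P : ℕ → Prop := fun t => 2 * S t ≤ c ^ 3 * (β t * Real.sqrt (β t)) with hP
  have hsplit := Finset.sum_filter_add_sum_filter_not (Finset.Icc 1 T) P
    (fun t => Real.sqrt (z t / β t))
  have h2pos : (0:ℝ) < (2 : ℝ) ^ ((1:ℝ)/3) := Real.rpow_pos_of_pos two_pos _
  have hA : ∑ t ∈ (Finset.Icc 1 T).filter P, Real.sqrt (z t / β t)
      ≤ c / (2 : ℝ) ^ ((1 : ℝ) / 3) * G1 T z (fun s => hhat (s + 1)) := by
    have hterm : ∀ t ∈ (Finset.Icc 1 T).filter P,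
        Real.sqrt (z t / β t)
          ≤ c / (2 : ℝ) ^ ((1:ℝ)/3) * (Real.sqrt (z t) / (S t) ^ ((1:ℝ)/3)) := by
      intro t ht
      rw [Finset.mem_filter] at ht
      obtain ⟨htI, htP⟩ := ht
      rw [Finset.mem_Icc] at htI
      have hβt := hβpos t htI.1 htI.2
      have hzt := hz t (Finset.mem_Icc.2 htI)
      rw [Real.sqrt_div hzt]
      rcases (hSnonneg t htI.2).eq_or_lt with hS0 | hS0
      · have hz0 : Real.sqrt (z t) = 0 := by
          have hmem : t ∈ Finset.Icc 1 t := Finset.mem_Icc.2 ⟨htI.1, le_rfl⟩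
          have hall := (Finset.sum_eq_zero_iff_of_nonneg
            (fun s hs => hStermpos t htI.2 s hs)).1 hS0.symm t hmem
          have hh : 0 < hhat (t + 1) := hhhat (t + 1) (Finset.mem_Icc.2 ⟨by omega, by omega⟩)
          field_simp at hall
          rw [hall]
          exact mul_zero _
        rw [hz0]
        simp
      · have hX : (0:ℝ) < (S t) ^ ((1:ℝ)/3) := Real.rpow_pos_of_pos hS0 _
        have e1 : ((2:ℝ) ^ ((1:ℝ)/3)) ^ (3:ℕ) = 2 := by
          rw [← Real.rpow_natCast ((2:ℝ) ^ ((1:ℝ)/3)) 3, ← Real.rpow_mul (by norm_num)]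
          norm_num
        have e2 : ((S t) ^ ((1:ℝ)/3)) ^ (3:ℕ) = S t := by
          rw [← Real.rpow_natCast ((S t) ^ ((1:ℝ)/3)) 3, ← Real.rpow_mul hS0.le]
          norm_num
        have hcube : ((2:ℝ) ^ ((1:ℝ)/3) * (S t) ^ ((1:ℝ)/3)) ^ (3:ℕ)
            ≤ (c * Real.sqrt (β t)) ^ (3:ℕ) := by
          rw [mul_pow, mul_pow, e1, e2, cube_sqrt _ hβt.le]
          linarith
        have hle : (2:ℝ) ^ ((1:ℝ)/3) * (S t) ^ ((1:ℝ)/3) ≤ c * Real.sqrt (β t) :=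
          le_of_cube_le _ _ (by positivity) hcube
        have hsβ : 0 < Real.sqrt (β t) := Real.sqrt_pos.2 hβt
        have hrhs : c / (2:ℝ) ^ ((1:ℝ)/3) * (Real.sqrt (z t) / (S t) ^ ((1:ℝ)/3))
            = c * Real.sqrt (z t) / ((2:ℝ) ^ ((1:ℝ)/3) * (S t) ^ ((1:ℝ)/3)) := by
          field_simp
        rw [hrhs, div_le_div_iff₀ hsβ (by positivity)]
        nlinarith [mul_le_mul_of_nonneg_left hle (Real.sqrt_nonneg (z t))]
    calc ∑ t ∈ (Finset.Icc 1 T).filter P, Real.sqrt (z t / β t)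
        ≤ ∑ t ∈ (Finset.Icc 1 T).filter P,
            c / (2:ℝ) ^ ((1:ℝ)/3) * (Real.sqrt (z t) / (S t) ^ ((1:ℝ)/3)) :=
          Finset.sum_le_sum hterm
      _ ≤ ∑ t ∈ Finset.Icc 1 T,
            c / (2:ℝ) ^ ((1:ℝ)/3) * (Real.sqrt (z t) / (S t) ^ ((1:ℝ)/3)) := by
          apply Finset.sum_le_sum_of_subset_of_nonneg (Finset.filter_subset _ _)
          intro s hs _
          have h1 : 0 ≤ Real.sqrt (z s) / (S s) ^ ((1:ℝ)/3) := by
            apply div_nonneg (Real.sqrt_nonneg _)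
            rw [Finset.mem_Icc] at hs
            exact Real.rpow_nonneg (hSnonneg s hs.2) _
          positivity
      _ = c / (2:ℝ) ^ ((1:ℝ)/3) * G1 T z (fun s => hhat (s + 1)) := by
          rw [G1, Finset.mul_sum]
  have hB : ∑ t ∈ (Finset.Icc 1 T).filter (fun t => ¬ P t), Real.sqrt (z t / β t)
      ≤ c / (c - 1) * Real.sqrt (zmax / β 1) := by
    set B := (Finset.Icc 1 T).filter (fun t => ¬ P t) with hBdef
    have h1T : (1:ℕ) ∈ Finset.Icc 1 T := Finset.mem_Icc.2 ⟨le_rfl, hT⟩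
    have hzmax0 : 0 ≤ zmax := by
      have h1 : z 1 ≤ zmax := hzmax ▸ Finset.le_sup' z h1T
      have := hz 1 h1T
      linarith
    have hmemI : ∀ t ∈ B, 1 ≤ t ∧ t ≤ T := by
      intro t ht
      rw [hBdef, Finset.mem_filter, Finset.mem_Icc] at ht
      exact ht.1
    have hpt : ∀ t ∈ B, Real.sqrt (z t / β t) ≤ Real.sqrt zmax * (1 / Real.sqrt (β t)) := by
      intro t ht
      obtain ⟨ht1, htT⟩ := hmemI t ht
      have hβt := hβpos t ht1 htT
      have hzt := hz t (Finset.mem_Icc.2 ⟨ht1, htT⟩)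
      rw [Real.sqrt_div hzt, mul_one_div]
      gcongr
      exact hzmax ▸ Finset.le_sup' z (Finset.mem_Icc.2 ⟨ht1, htT⟩)
    have hg : ∑ t ∈ B, 1 / Real.sqrt (β t) ≤ c / ((c - 1) * Real.sqrt (β 1)) := by
      apply geom_sum_bound c hc (fun t => Real.sqrt (β t)) B.card B rfl _ (Real.sqrt_pos.2 hβ1)
      · intro t ht
        obtain ⟨ht1, htT⟩ := hmemI t ht
        exact hβge t ht1 htT
      · intro t ht t' ht' hlt
        obtain ⟨ht1, htT⟩ := hmemI t ht
        obtain ⟨ht1', htT'⟩ := hmemI t' ht'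
        have hβt := hβpos t ht1 htT
        have hβt' := hβpos t' ht1' htT'
        apply le_of_cube_le _ _ (by positivity)
        rw [mul_pow, cube_sqrt _ hβt.le, cube_sqrt _ hβt'.le]
        have hnotP : ¬ P t := by
          rw [hBdef, Finset.mem_filter] at ht
          exact ht.2
        rw [hP] at hnotP
        push_neg at hnotP
        have hgr := hgrow t' ht1' htT'
        have hSm : S t ≤ S (t' - 1) := hSmono t (t' - 1) (by omega) (by omega)
        have hSn : 0 ≤ S t := hSnonneg t htT
        have hβ1s : 0 ≤ β 1 * Real.sqrt (β 1) := by positivity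
        nlinarith
    calc ∑ t ∈ B, Real.sqrt (z t / β t)
        ≤ ∑ t ∈ B, Real.sqrt zmax * (1 / Real.sqrt (β t)) := Finset.sum_le_sum hpt
      _ = Real.sqrt zmax * ∑ t ∈ B, 1 / Real.sqrt (β t) := by rw [Finset.mul_sum]
      _ ≤ Real.sqrt zmax * (c / ((c - 1) * Real.sqrt (β 1))) :=
          mul_le_mul_of_nonneg_left hg (Real.sqrt_nonneg _)
      _ = c / (c - 1) * Real.sqrt (zmax / β 1) := by
          rw [Real.sqrt_div hzmax0, div_mul_div_comm, mul_comm (Real.sqrt zmax)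
            (c / ((c - 1) * Real.sqrt (β 1))), div_mul_eq_mul_div, mul_div_assoc]
  rw [← hsplit]
  exact add_le_add hA hB
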